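/- Let K have characteristic zero and let I, J be monomial ideals in K[x_1,...,x_n]. A monomial m is a standard monomial of I*J (i.e., m ∉ I*J) if and only if m = m_1·m_2 for some monomials m_1 ∉ I and m_2 ∉ J. -/

import Mathlib

open MvPolynomial

/-- The join `I * J` of two ideals in `K[x_1,...,x_n]`: the elimination ideal
`(I(y) + J(z) + ⟨y_i + z_i - x_i⟩) ∩ K[x]`, realized in the polynomial ring on
`Fin n ⊕ (Fin n ⊕ Fin n)` where `Sum.inl` are the `x`-variables, `Sum.inr ∘ Sum.inl`
the `y`-variables and `Sum.inr ∘ Sum.inr` the `z`-variables. -/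
noncomputable def joinIdeal {K : Type*} [Field K] {n : ℕ}
    (I J : Ideal (MvPolynomial (Fin n) K)) : Ideal (MvPolynomial (Fin n) K) :=
  Ideal.comap (rename (Sum.inl : Fin n → Fin n ⊕ (Fin n ⊕ Fin n)))
    (Ideal.map (rename (fun i : Fin n => (Sum.inr (Sum.inl i) : Fin n ⊕ (Fin n ⊕ Fin n)))) I ⊔
     Ideal.map (rename (fun i : Fin n => (Sum.inr (Sum.inr i) : Fin n ⊕ (Fin n ⊕ Fin n)))) J ⊔
     Ideal.span {p : MvPolynomial (Fin n ⊕ (Fin n ⊕ Fin n)) K | ∃ i : Fin n,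
       p = X (Sum.inr (Sum.inl i)) + X (Sum.inr (Sum.inr i)) - X (Sum.inl i)})

/-- The `r`-th secant ideal `I^{r}`, the `r`-fold join of `I` with itself.
(The `0`-th secant is the irrelevant maximal ideal `⟨x_1,...,x_n⟩`, the identity for join.) -/
noncomputable def secantIdeal {K : Type*} [Field K] {n : ℕ}
    (I : Ideal (MvPolynomial (Fin n) K)) : ℕ → Ideal (MvPolynomial (Fin n) K)
  | 0 => Ideal.span (Set.range X)
  | 1 => I
  | (r + 2) => joinIdeal (secantIdeal I (r + 1)) I

/-- An ideal of `K[x_1,...,x_n]` is a monomial ideal if it is generated by monomials. -/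
def IsMonomialIdeal {K : Type*} [Field K] {n : ℕ} (I : Ideal (MvPolynomial (Fin n) K)) : Prop :=
  ∃ S : Set (Fin n →₀ ℕ), I = Ideal.span ((fun m => monomial m (1 : K)) '' S)

namespace Stmt4Aux

variable {K : Type*} [Field K] {n : ℕ}

abbrev V (n : ℕ) := Fin n ⊕ (Fin n ⊕ Fin n)
abbrev yv (i : Fin n) : V n := Sum.inr (Sum.inl i)
abbrev zv (i : Fin n) : V n := Sum.inr (Sum.inr i)

lemma yv_inj : Function.Injective (yv (n := n)) := fun i j h => by simpa using h
lemma zv_inj : Function.Injective (zv (n := n)) := fun i j h => by simpa using h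

/-- The substitution x ↦ y + z, fixing y and z. -/
noncomputable def psi (K : Type*) [CommSemiring K] (n : ℕ) :
    MvPolynomial (V n) K →ₐ[K] MvPolynomial (V n) K :=
  aeval (Sum.elim (fun i => X (yv i) + X (zv i)) (fun w => X (Sum.inr w)))

lemma psi_rename_inl (f : MvPolynomial (Fin n) K) :
    psi K n (rename Sum.inl f) =
      aeval (fun i : Fin n => (X (yv i) + X (zv i) : MvPolynomial (V n) K)) f := by
  rw [psi, aeval_rename]
  rfl

lemma psi_rename_yv (p : MvPolynomial (Fin n) K) :
    psi K n (rename (yv (n := n)) p) = rename (yv (n := n)) p := by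
  rw [psi, aeval_rename]
  have : (Sum.elim (fun i => X (yv i) + X (zv i))
      (fun w => (X (Sum.inr w) : MvPolynomial (V n) K))) ∘ yv (n := n) = X ∘ yv (n := n) := rfl
  rw [this]
  exact (DFunLike.congr_fun (rename_eq_aeval _) p).symm

lemma psi_rename_zv (p : MvPolynomial (Fin n) K) :
    psi K n (rename (zv (n := n)) p) = rename (zv (n := n)) p := by
  rw [psi, aeval_rename]
  have : (Sum.elim (fun i => X (yv i) + X (zv i))
      (fun w => (X (Sum.inr w) : MvPolynomial (V n) K))) ∘ zv (n := n) = X ∘ zv (n := n) := rfl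
  rw [this]
  exact (DFunLike.congr_fun (rename_eq_aeval _) p).symm

lemma sub_psi_mem (p : MvPolynomial (V n) K) :
    p - psi K n p ∈ Ideal.span {p : MvPolynomial (V n) K | ∃ i : Fin n,
      p = X (yv i) + X (zv i) - X (Sum.inl i)} := by
  set R : Ideal (MvPolynomial (V n) K) := Ideal.span {p : MvPolynomial (V n) K | ∃ i : Fin n,
      p = X (yv i) + X (zv i) - X (Sum.inl i)} with hR
  have hq : (Ideal.Quotient.mkₐ K R).comp (psi K n) = Ideal.Quotient.mkₐ K R := by
    apply MvPolynomial.algHom_ext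
    rintro (i | w)
    · show Ideal.Quotient.mkₐ K R (psi K n (X (Sum.inl i))) = _
      rw [psi, aeval_X]
      show Ideal.Quotient.mk R (X (yv i) + X (zv i)) = Ideal.Quotient.mk R (X (Sum.inl i))
      rw [Ideal.Quotient.eq]
      exact Ideal.subset_span ⟨i, rfl⟩
    · show Ideal.Quotient.mkₐ K R (psi K n (X (Sum.inr w))) = _
      rw [psi, aeval_X]
      rfl
  have h0 : Ideal.Quotient.mk R (p - psi K n p) = 0 := by
    rw [map_sub, sub_eq_zero]
    exact (DFunLike.congr_fun hq p).symm
  exact Ideal.Quotient.eq_zero_iff_mem.mp h0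

theorem mem_joinIdeal_iff {I J : Ideal (MvPolynomial (Fin n) K)} (f : MvPolynomial (Fin n) K) :
    f ∈ joinIdeal I J ↔
      aeval (fun i : Fin n => (X (yv i) + X (zv i) : MvPolynomial (V n) K)) f ∈
        Ideal.map (rename (yv (n := n))) I ⊔ Ideal.map (rename (zv (n := n))) J := by
  set R : Ideal (MvPolynomial (V n) K) := Ideal.span {p : MvPolynomial (V n) K | ∃ i : Fin n,
      p = X (yv i) + X (zv i) - X (Sum.inl i)} with hRdef
  set I' : Ideal (MvPolynomial (V n) K) := Ideal.map (rename (yv (n := n))) I with hI'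
  set J' : Ideal (MvPolynomial (V n) K) := Ideal.map (rename (zv (n := n))) J with hJ'
  have hmem : f ∈ joinIdeal I J ↔ rename Sum.inl f ∈ I' ⊔ J' ⊔ R := Iff.rfl
  rw [hmem]
  constructor
  · intro h
    have hmap : Ideal.map (psi K n) (I' ⊔ J' ⊔ R) ≤ I' ⊔ J' := by
      rw [Ideal.map_le_iff_le_comap]
      refine sup_le (sup_le ?_ ?_) ?_
      · rw [hI', Ideal.map_le_iff_le_comap]
        intro p hp
        rw [Ideal.mem_comap, Ideal.mem_comap, psi_rename_yv]
        exact Ideal.mem_sup_left (Ideal.mem_map_of_mem _ hp)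
      · rw [hJ', Ideal.map_le_iff_le_comap]
        intro p hp
        rw [Ideal.mem_comap, Ideal.mem_comap, psi_rename_zv]
        exact Ideal.mem_sup_right (Ideal.mem_map_of_mem _ hp)
      · rw [hRdef, Ideal.span_le]
        rintro p ⟨i, rfl⟩
        have : psi K n (X (yv i) + X (zv i) - X (Sum.inl i)) = 0 := by
          rw [psi]
          simp only [map_sub, map_add, aeval_X]
          show X (yv i) + X (zv i) - (X (yv i) + X (zv i)) = 0
          ring
        simp only [SetLike.mem_coe, Ideal.mem_comap, this]
        exact zero_mem _
    have := hmap (Ideal.mem_map_of_mem (psi K n) h)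
    rwa [psi_rename_inl] at this
  · intro h
    rw [← psi_rename_inl] at h
    have h1 : psi K n (rename Sum.inl f) ∈ I' ⊔ J' ⊔ R := Ideal.mem_sup_left h
    have h2 : rename Sum.inl f - psi K n (rename Sum.inl f) ∈ I' ⊔ J' ⊔ R :=
      Ideal.mem_sup_right (sub_psi_mem _)
    simpa using add_mem h1 h2

end Stmt4Aux

namespace Stmt4Aux

variable {K : Type*} [Field K] {n : ℕ}

/-! ### generic semiring helpers -/

theorem pow_add_expansion {A : Type*} [CommSemiring A] (x y : A) (j l : ℕ) :
    ∃ r : A, (x + y) ^ (j + l) = x ^ j * y ^ l + r := by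
  obtain ⟨t, ht⟩ : ∃ t, (j + l).choose j = t + 1 :=
    ⟨(j + l).choose j - 1, (Nat.succ_pred_eq_of_pos (Nat.choose_pos (Nat.le_add_right j l))).symm⟩
  refine ⟨x ^ j * y ^ l * t + ∑ m ∈ (Finset.range (j + l + 1)).erase j,
      x ^ m * y ^ (j + l - m) * ((j + l).choose m), ?_⟩
  rw [add_pow, ← Finset.add_sum_erase _ _ (show j ∈ Finset.range (j + l + 1) from
      Finset.mem_range.mpr (by omega)), Nat.add_sub_cancel_left, ht]
  push_cast
  ring

theorem prod_add_expansion {ι A : Type*} [CommSemiring A] (s : Finset ι) (u r : ι → A) :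
    ∃ R : A, ∏ i ∈ s, (u i + r i) = (∏ i ∈ s, u i) + R := by
  classical
  induction s using Finset.induction with
  | empty => exact ⟨0, by simp⟩
  | @insert a s ha ih =>
    obtain ⟨R, hR⟩ := ih
    refine ⟨u a * R + r a * ((∏ i ∈ s, u i) + R), ?_⟩
    rw [Finset.prod_insert ha, Finset.prod_insert ha, hR]
    ring

/-! ### monomials as products -/

theorem monomial_one_eq_prod {R : Type*} [CommSemiring R] (b : Fin n →₀ ℕ) :
    (monomial b (1 : R)) = ∏ i : Fin n, X i ^ b i := by
  rw [← prod_X_pow_eq_monomial]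
  exact Finset.prod_subset (Finset.subset_univ _) (fun x _ hx => by
    rw [Finsupp.notMem_support_iff.mp hx, pow_zero])

theorem prod_X_comp_pow {R : Type*} [CommSemiring R] (f : Fin n → V n) (b : Fin n →₀ ℕ) :
    (∏ i : Fin n, (X (f i) : MvPolynomial (V n) R) ^ b i) = monomial (Finsupp.mapDomain f b) 1 := by
  rw [← rename_monomial, monomial_one_eq_prod, map_prod]
  refine Finset.prod_congr rfl fun i _ => ?_
  rw [map_pow, rename_X]

theorem prod_X_pow_mul {R : Type*} [CommSemiring R] (b c : Fin n →₀ ℕ) :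
    (∏ i : Fin n, (X (yv i) : MvPolynomial (V n) R) ^ b i * X (zv i) ^ c i)
      = monomial (Finsupp.mapDomain (yv (n := n)) b + Finsupp.mapDomain (zv (n := n)) c) 1 := by
  rw [Finset.prod_mul_distrib, prod_X_comp_pow, prod_X_comp_pow, monomial_mul, one_mul]

theorem aeval_monomial_prod {R : Type*} [CommSemiring R] (a : Fin n →₀ ℕ) :
    aeval (fun i : Fin n => (X (yv i) + X (zv i) : MvPolynomial (V n) R)) (monomial a (1 : R))
      = ∏ i : Fin n, (X (yv i) + X (zv i) : MvPolynomial (V n) R) ^ a i := by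
  rw [aeval_monomial, map_one, one_mul, Finsupp.prod_fintype]
  intro i; exact pow_zero _

/-! ### the key coefficient fact -/

theorem exists_expansion (b c : Fin n →₀ ℕ) :
    ∃ T : MvPolynomial (V n) ℕ,
      aeval (fun i : Fin n => (X (yv i) + X (zv i) : MvPolynomial (V n) ℕ)) (monomial (b + c) (1 : ℕ))
        = monomial (Finsupp.mapDomain (yv (n := n)) b + Finsupp.mapDomain (zv (n := n)) c) 1 + T := by
  choose r hr using fun i =>
    pow_add_expansion (X (yv i) : MvPolynomial (V n) ℕ) (X (zv i)) (b i) (c i)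
  obtain ⟨Rr, hR⟩ := prod_add_expansion Finset.univ
    (fun i => (X (yv i) : MvPolynomial (V n) ℕ) ^ b i * X (zv i) ^ c i) r
  refine ⟨Rr, ?_⟩
  rw [aeval_monomial_prod]
  have hcong : ∀ i ∈ Finset.univ, (X (yv i) + X (zv i) : MvPolynomial (V n) ℕ) ^ ((b + c) i)
      = (X (yv i)) ^ b i * (X (zv i)) ^ c i + r i := by
    intro i _; rw [Finsupp.add_apply]; exact hr i
  rw [Finset.prod_congr rfl hcong, hR, prod_X_pow_mul]

theorem coeff_ne_zero [CharZero K] (b c : Fin n →₀ ℕ) :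
    coeff (Finsupp.mapDomain (yv (n := n)) b + Finsupp.mapDomain (zv (n := n)) c)
      (aeval (fun i : Fin n => (X (yv i) + X (zv i) : MvPolynomial (V n) K))
        (monomial (b + c) (1 : K))) ≠ 0 := by
  classical
  obtain ⟨T, hT⟩ := exists_expansion (n := n) b c
  have hmapeq : aeval (fun i : Fin n => (X (yv i) + X (zv i) : MvPolynomial (V n) K))
      (monomial (b + c) (1 : K))
      = MvPolynomial.map (Nat.castRingHom K)
        (aeval (fun i : Fin n => (X (yv i) + X (zv i) : MvPolynomial (V n) ℕ))
          (monomial (b + c) (1 : ℕ))) := by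
    rw [aeval_monomial_prod, aeval_monomial_prod, map_prod]
    refine Finset.prod_congr rfl fun i _ => ?_
    rw [map_pow, map_add, MvPolynomial.map_X, MvPolynomial.map_X]
  rw [hmapeq, MvPolynomial.coeff_map, hT, coeff_add, coeff_monomial, if_pos rfl]
  exact_mod_cast Nat.cast_ne_zero.mpr (by omega)

/-! ### support of the expansion -/

theorem support_add_pow (i : Fin n) (k : ℕ) :
    ∀ μ ∈ ((X (yv i) + X (zv i) : MvPolynomial (V n) K) ^ k).support,
      ∃ j, j ≤ k ∧ μ = Finsupp.single (yv i) j + Finsupp.single (zv i) (k - j) := by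
  classical
  intro μ hμ
  rw [add_pow] at hμ
  obtain ⟨j, hj, hμ2⟩ := Finset.mem_biUnion.mp (MvPolynomial.support_sum hμ)
  refine ⟨j, by have := Finset.mem_range.mp hj; omega, ?_⟩
  have hterm : (X (yv i) : MvPolynomial (V n) K) ^ j * X (zv i) ^ (k - j)
        * ((k.choose j : ℕ) : MvPolynomial (V n) K)
      = monomial (Finsupp.single (yv i) j + Finsupp.single (zv i) (k - j)) ((k.choose j : K)) := by
    rw [X_pow_eq_monomial, X_pow_eq_monomial, monomial_mul, one_mul]
    rw [show ((k.choose j : ℕ) : MvPolynomial (V n) K) = C ((k.choose j : K)) by norm_cast]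
    rw [mul_comm, C_mul_monomial, mul_one]
  rw [hterm, support_monomial] at hμ2
  split at hμ2
  · exact absurd hμ2 (Finset.notMem_empty μ)
  · exact Finset.mem_singleton.mp hμ2

theorem support_subset (a : Fin n →₀ ℕ) :
    ∀ μ ∈ (aeval (fun i : Fin n => (X (yv i) + X (zv i) : MvPolynomial (V n) K))
        (monomial a (1 : K))).support,
      ∃ b c : Fin n →₀ ℕ, b + c = a
        ∧ μ = Finsupp.mapDomain (yv (n := n)) b + Finsupp.mapDomain (zv (n := n)) c := by
  classical
  induction a using Finsupp.induction with
  | zero =>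
    intro μ hμ
    refine ⟨0, 0, by simp, ?_⟩
    have h1 : (monomial (0 : Fin n →₀ ℕ) (1 : K)) = 1 := by simp
    rw [h1, map_one] at hμ
    have h2 : (1 : MvPolynomial (V n) K) = monomial 0 1 := by simp
    rw [h2, support_monomial, if_neg one_ne_zero] at hμ
    simp [Finset.mem_singleton.mp hμ]
  | single_add i k f hif hk ih =>
    intro μ hμ
    have hsplit : monomial (Finsupp.single i k + f) (1 : K)
        = monomial (Finsupp.single i k) 1 * monomial f 1 := by rw [monomial_mul, one_mul]
    rw [hsplit, map_mul] at hμ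
    obtain ⟨μ1, hμ1, μ2, hμ2, rfl⟩ := Finset.mem_add.mp (MvPolynomial.support_mul _ _ hμ)
    have hpow : aeval (fun i : Fin n => (X (yv i) + X (zv i) : MvPolynomial (V n) K))
        (monomial (Finsupp.single i k) (1 : K)) = (X (yv i) + X (zv i)) ^ k := by
      rw [aeval_monomial, map_one, one_mul, Finsupp.prod_single_index]
      exact pow_zero _
    rw [hpow] at hμ1
    obtain ⟨j, hjk, rfl⟩ := support_add_pow i k μ1 hμ1
    obtain ⟨b2, c2, hbc2, rfl⟩ := ih μ2 hμ2
    refine ⟨Finsupp.single i j + b2, Finsupp.single i (k - j) + c2, ?_, ?_⟩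
    · have hsingle : Finsupp.single i j + Finsupp.single i (k - j) = Finsupp.single i k := by
        rw [← Finsupp.single_add, Nat.add_sub_cancel' hjk]
      rw [add_add_add_comm, hsingle, hbc2]
    · rw [Finsupp.mapDomain_add, Finsupp.mapDomain_add, Finsupp.mapDomain_single,
        Finsupp.mapDomain_single]
      exact add_add_add_comm _ _ _ _

/-! ### order helpers -/

theorem Ey_le_add {t b c : Fin n →₀ ℕ} (h : t ≤ b) :
    Finsupp.mapDomain (yv (n := n)) t
      ≤ Finsupp.mapDomain (yv (n := n)) b + Finsupp.mapDomain (zv (n := n)) c := by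
  obtain ⟨d, rfl⟩ := le_iff_exists_add.mp h
  rw [Finsupp.mapDomain_add, add_assoc]
  exact le_self_add

theorem Ez_le_add {t b c : Fin n →₀ ℕ} (h : t ≤ c) :
    Finsupp.mapDomain (zv (n := n)) t
      ≤ Finsupp.mapDomain (yv (n := n)) b + Finsupp.mapDomain (zv (n := n)) c := by
  obtain ⟨d, rfl⟩ := le_iff_exists_add.mp h
  rw [Finsupp.mapDomain_add]
  calc Finsupp.mapDomain (zv (n := n)) t
      ≤ Finsupp.mapDomain (zv (n := n)) t + (Finsupp.mapDomain (yv (n := n)) b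
          + Finsupp.mapDomain (zv (n := n)) d) := le_self_add
    _ = _ := by abel

theorem le_of_Ey_le {t b c : Fin n →₀ ℕ}
    (h : Finsupp.mapDomain (yv (n := n)) t
      ≤ Finsupp.mapDomain (yv (n := n)) b + Finsupp.mapDomain (zv (n := n)) c) : t ≤ b := by
  rw [Finsupp.le_def]
  intro i
  have := Finsupp.le_def.mp h (yv i)
  rwa [Finsupp.add_apply, Finsupp.mapDomain_apply yv_inj, Finsupp.mapDomain_apply yv_inj,
    Finsupp.mapDomain_notin_range _ _ (by rintro ⟨j, hj⟩; simp at hj), add_zero] at this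

theorem le_of_Ez_le {t b c : Fin n →₀ ℕ}
    (h : Finsupp.mapDomain (zv (n := n)) t
      ≤ Finsupp.mapDomain (yv (n := n)) b + Finsupp.mapDomain (zv (n := n)) c) : t ≤ c := by
  rw [Finsupp.le_def]
  intro i
  have := Finsupp.le_def.mp h (zv i)
  rwa [Finsupp.add_apply, Finsupp.mapDomain_apply zv_inj, Finsupp.mapDomain_apply zv_inj,
    Finsupp.mapDomain_notin_range _ _ (by rintro ⟨j, hj⟩; simp at hj), zero_add] at this

theorem mem_span_monomials {S : Set (Fin n →₀ ℕ)} {b : Fin n →₀ ℕ} :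
    monomial b (1 : K) ∈ Ideal.span ((fun m => monomial m (1 : K)) '' S) ↔ ∃ s ∈ S, s ≤ b := by
  rw [mem_ideal_span_monomial_image]
  have hs : (monomial b (1 : K)).support = {b} := by
    classical
    rw [support_monomial, if_neg one_ne_zero]
  rw [hs]
  simp

end Stmt4Aux

open Stmt4Aux in
theorem stmt_4' (K : Type*) [Field K] [CharZero K] (n : ℕ)
    (I J : Ideal (MvPolynomial (Fin n) K))
    (hI : ∃ S : Set (Fin n →₀ ℕ), I = Ideal.span ((fun m => monomial m (1 : K)) '' S))
    (hJ : ∃ S : Set (Fin n →₀ ℕ), J = Ideal.span ((fun m => monomial m (1 : K)) '' S))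
    (a : Fin n →₀ ℕ) :
    monomial a (1 : K) ∉ joinIdeal I J ↔
      ∃ b c : Fin n →₀ ℕ, b + c = a ∧ monomial b (1 : K) ∉ I ∧ monomial c (1 : K) ∉ J := by
  obtain ⟨SI, hSI⟩ := hI
  obtain ⟨SJ, hSJ⟩ := hJ
  have hsup : Ideal.map (rename (yv (n := n))) I ⊔ Ideal.map (rename (zv (n := n))) J
      = Ideal.span ((fun m => monomial m (1 : K)) ''
        (Finsupp.mapDomain (yv (n := n)) '' SI ∪ Finsupp.mapDomain (zv (n := n)) '' SJ)) := by
    rw [Set.image_union, Ideal.span_union, hSI, hSJ, Ideal.map_span, Ideal.map_span,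
      Set.image_image, Set.image_image, Set.image_image, Set.image_image]
    simp_rw [rename_monomial]
  have hmem : monomial a (1 : K) ∈ joinIdeal I J ↔
      ∀ b c : Fin n →₀ ℕ, b + c = a → (monomial b (1 : K) ∈ I ∨ monomial c (1 : K) ∈ J) := by
    rw [mem_joinIdeal_iff, hsup, mem_ideal_span_monomial_image]
    constructor
    · intro h b c hbc
      subst hbc
      obtain ⟨s, hs, hle⟩ := h _ (mem_support_iff.mpr (coeff_ne_zero b c))
      rcases (Set.mem_union _ _ _).mp hs with ⟨t, ht, rfl⟩ | ⟨t, ht, rfl⟩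
      · left; rw [hSI, mem_span_monomials]; exact ⟨t, ht, le_of_Ey_le hle⟩
      · right; rw [hSJ, mem_span_monomials]; exact ⟨t, ht, le_of_Ez_le hle⟩
    · intro h μ hμ
      obtain ⟨b, c, hbc, rfl⟩ := support_subset a μ hμ
      rcases h b c hbc with hb | hc
      · rw [hSI, mem_span_monomials] at hb
        obtain ⟨t, ht, hle⟩ := hb
        exact ⟨_, Set.mem_union_left _ ⟨t, ht, rfl⟩, Ey_le_add hle⟩
      · rw [hSJ, mem_span_monomials] at hc
        obtain ⟨t, ht, hle⟩ := hc
        exact ⟨_, Set.mem_union_right _ ⟨t, ht, rfl⟩, Ez_le_add hle⟩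
  rw [hmem]
  constructor
  · intro h
    by_contra h2
    apply h
    intro b c hbc
    by_contra h3
    push_neg at h3
    exact h2 ⟨b, c, hbc, h3.1, h3.2⟩
  · rintro ⟨b, c, hbc, hb, hc⟩ h
    rcases h b c hbc with h' | h'
    exacts [hb h', hc h']


/-- in characteristic zero, a monomial `x^a` is standard for `I*J`
(i.e. `x^a ∉ I*J`) iff it is a product of a standard monomial of `I` and one of `J`. -/
theorem stmt_4 (K : Type*) [Field K] [CharZero K] (n : ℕ)
    (I J : Ideal (MvPolynomial (Fin n) K))
    (hI : IsMonomialIdeal I) (hJ : IsMonomialIdeal J) (a : Fin n →₀ ℕ) :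
    monomial a (1 : K) ∉ joinIdeal I J ↔
      ∃ b c : Fin n →₀ ℕ, b + c = a ∧ monomial b (1 : K) ∉ I ∧ monomial c (1 : K) ∉ J := by
  exact stmt_4' K n I J hI hJ a
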